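/- Let A be an n×n singular strict contraction (i.e., ‖A‖ < 1 and det A = 0). Then the largest eigenvalue of Re((I−A)⁻¹) is at least 1; in particular ‖Re((I−A)⁻¹)‖ ≥ ‖(I+|A|)⁻¹‖ = 1. -/

import Mathlib

open Matrix
open scoped ComplexOrder

noncomputable def eigDesc {n : ℕ} {A : Matrix (Fin n) (Fin n) ℂ} (hA : A.IsHermitian)
    (j : Fin n) : ℝ :=
  (hA.eigenvalues ∘ Tuple.sort hA.eigenvalues) j.rev

noncomputable def singVal {n : ℕ} (A : Matrix (Fin n) (Fin n) ℂ) (j : Fin n) : ℝ :=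
  Real.sqrt (eigDesc ((Matrix.posSemidef_conjTranspose_mul_self A).isHermitian) j)

noncomputable def hermPart {n : ℕ} (X : Matrix (Fin n) (Fin n) ℂ) :
    Matrix (Fin n) (Fin n) ℂ :=
  (1/2 : ℂ) • (X + Xᴴ)

lemma hermPart_isHermitian {n : ℕ} (X : Matrix (Fin n) (Fin n) ℂ) :
    (hermPart X).IsHermitian := by
  unfold hermPart
  simp [Matrix.IsHermitian, Matrix.conjTranspose_smul, Matrix.conjTranspose_add, add_comm]

noncomputable def psdSqrt {n : ℕ} {A : Matrix (Fin n) (Fin n) ℂ} (hA : A.PosSemidef) :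
    Matrix (Fin n) (Fin n) ℂ :=
  (hA.1.eigenvectorUnitary : Matrix (Fin n) (Fin n) ℂ) *
    diagonal ((↑) ∘ (√·) ∘ hA.1.eigenvalues) *
    (star hA.1.eigenvectorUnitary : Matrix (Fin n) (Fin n) ℂ)

section helpers

variable {n : ℕ} {M : Matrix (Fin n) (Fin n) ℂ}

lemma eigDesc_top_eq (hn : 0 < n) (hM : M.IsHermitian) :
    ∃ i, eigDesc hM ⟨0, hn⟩ = hM.eigenvalues i :=
  ⟨Tuple.sort hM.eigenvalues (Fin.rev ⟨0, hn⟩), rfl⟩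

lemma le_eigDesc_top (hn : 0 < n) (hM : M.IsHermitian) (i : Fin n) :
    hM.eigenvalues i ≤ eigDesc hM ⟨0, hn⟩ := by
  have hmono := Tuple.monotone_sort hM.eigenvalues
  have h1 : ((Tuple.sort hM.eigenvalues).symm i) ≤ Fin.rev ⟨0, hn⟩ := by
    have := ((Tuple.sort hM.eigenvalues).symm i).isLt
    simp only [Fin.le_def, Fin.rev]
    omega
  have := hmono h1
  simpa [eigDesc] using this

lemma eigenvalues_eq_eigDesc (hM : M.IsHermitian) (i : Fin n) :
    ∃ j, hM.eigenvalues i = eigDesc hM j := by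
  refine ⟨Fin.rev ((Tuple.sort hM.eigenvalues).symm i), ?_⟩
  simp [eigDesc]

lemma smul_one_sub_posSemidef_iff (hM : M.IsHermitian) (c : ℝ) :
    ((c : ℂ) • (1 : Matrix (Fin n) (Fin n) ℂ) - M).PosSemidef ↔
      ∀ i, hM.eigenvalues i ≤ c := by
  set U : Matrix (Fin n) (Fin n) ℂ := (hM.eigenvectorUnitary : Matrix (Fin n) (Fin n) ℂ)
  have hU1 : U * star U = 1 := mem_unitaryGroup_iff.mp hM.eigenvectorUnitary.2
  have hU2 : star U * U = 1 := mem_unitaryGroup_iff'.mp hM.eigenvectorUnitary.2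
  have key : (c : ℂ) • (1 : Matrix (Fin n) (Fin n) ℂ) - M
      = U * diagonal (fun i => ((c - hM.eigenvalues i : ℝ) : ℂ)) * star U := by
    conv_lhs => rw [hM.spectral_theorem, Unitary.conjStarAlgAut_apply]
    have hd : diagonal (fun i : Fin n => ((c - hM.eigenvalues i : ℝ) : ℂ))
        = (c : ℂ) • (1 : Matrix (Fin n) (Fin n) ℂ)
          - diagonal (RCLike.ofReal ∘ hM.eigenvalues) := by
      rw [smul_one_eq_diagonal, diagonal_sub]
      funext i
      push_cast
      rfl
    rw [hd, Matrix.mul_sub, Matrix.sub_mul, Matrix.mul_smul, Matrix.mul_one,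
      Matrix.smul_mul, hU1]
  constructor
  · intro h i
    have h2 := h.conjTranspose_mul_mul_same U
    rw [key] at h2
    have heq : Uᴴ * (U * diagonal (fun i => ((c - hM.eigenvalues i : ℝ) : ℂ)) * star U) * U
        = diagonal (fun i => ((c - hM.eigenvalues i : ℝ) : ℂ)) := by
      rw [← Matrix.star_eq_conjTranspose, ← Matrix.mul_assoc, ← Matrix.mul_assoc, hU2,
        Matrix.one_mul, Matrix.mul_assoc, hU2, Matrix.mul_one]
    rw [heq] at h2
    have := posSemidef_diagonal_iff.mp h2 i
    rw [Complex.zero_le_real] at this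
    linarith
  · intro h
    rw [key]
    refine Matrix.PosSemidef.mul_mul_conjTranspose_same ?_ U
    refine posSemidef_diagonal_iff.mpr fun i => ?_
    rw [Complex.zero_le_real]
    linarith [h i]

lemma quad_le_eigDesc_top (hn : 0 < n) (hM : M.IsHermitian) (x : Fin n → ℂ) :
    star x ⬝ᵥ (M *ᵥ x) ≤ (eigDesc hM ⟨0, hn⟩ : ℂ) * (star x ⬝ᵥ x) := by
  have hpsd := (smul_one_sub_posSemidef_iff hM (eigDesc hM ⟨0, hn⟩)).mpr
    (le_eigDesc_top hn hM)
  have h0 := hpsd.dotProduct_mulVec_nonneg x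
  rw [Matrix.sub_mulVec, Matrix.smul_mulVec, Matrix.one_mulVec, dotProduct_sub,
    dotProduct_smul] at h0
  rw [← sub_nonneg]
  simpa using h0

lemma dotProduct_star_self_pos {x : Fin n → ℂ} (hx : x ≠ 0) :
    (0 : ℂ) < star x ⬝ᵥ x := by
  refine lt_of_le_of_ne (dotProduct_star_self_nonneg x) ?_
  intro h
  exact hx (dotProduct_star_self_eq_zero.mp h.symm)

lemma r_le_eigDesc_top (hn : 0 < n) (hM : M.IsHermitian) {x : Fin n → ℂ} (hx : x ≠ 0)
    {r : ℝ} (h : star x ⬝ᵥ (M *ᵥ x) = (r : ℂ) * (star x ⬝ᵥ x)) :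
    r ≤ eigDesc hM ⟨0, hn⟩ := by
  have ht := dotProduct_star_self_pos hx
  have hle := quad_le_eigDesc_top hn hM x
  rw [h] at hle
  set t := star x ⬝ᵥ x with hts
  obtain ⟨hre, him⟩ := Complex.lt_def.mp ht
  have hteq : t = ((t.re : ℝ) : ℂ) := by
    apply Complex.ext <;> simp [← him]
  rw [hteq, ← Complex.ofReal_mul, ← Complex.ofReal_mul, Complex.real_le_real] at hle
  have h0 : (0:ℝ) < t.re := by simpa using hre
  nlinarith

lemma eigDesc_top_le (hn : 0 < n) (hM : M.IsHermitian) {c : ℝ}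
    (h : ∀ i, hM.eigenvalues i ≤ c) : eigDesc hM ⟨0, hn⟩ ≤ c := by
  obtain ⟨i, hi⟩ := eigDesc_top_eq hn hM
  rw [hi]; exact h i

lemma quad_conjTranspose_eq_star (M : Matrix (Fin n) (Fin n) ℂ) (x : Fin n → ℂ) :
    star x ⬝ᵥ (Mᴴ *ᵥ x) = star (star x ⬝ᵥ (M *ᵥ x)) := by
  rw [dotProduct_mulVec, ← star_mulVec, star_dotProduct]

end helpers

theorem stmt16 {n : ℕ} (hn : 0 < n) (A : Matrix (Fin n) (Fin n) ℂ) (hA : ∀ j, singVal A j < 1)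
    (hdet : A.det = 0) :
    1 ≤ eigDesc (hermPart_isHermitian (1 - A)⁻¹) ⟨0, hn⟩ ∧
      singVal ((1 + psdSqrt (Matrix.posSemidef_conjTranspose_mul_self A))⁻¹) ⟨0, hn⟩ = 1 ∧
      singVal ((1 + psdSqrt (Matrix.posSemidef_conjTranspose_mul_self A))⁻¹) ⟨0, hn⟩ ≤
        singVal (hermPart (1 - A)⁻¹) ⟨0, hn⟩ := by
  have hAA := Matrix.posSemidef_conjTranspose_mul_self A
  -- all eigenvalues of AᴴA are < 1
  have heig : ∀ i, hAA.isHermitian.eigenvalues i < 1 := by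
    intro i
    obtain ⟨j, hj⟩ := eigenvalues_eq_eigDesc hAA.isHermitian i
    have h1 := hA j
    unfold singVal at h1
    rw [← hj] at h1
    have hnn := hAA.eigenvalues_nonneg i
    nlinarith [Real.sq_sqrt hnn, Real.sqrt_nonneg (hAA.isHermitian.eigenvalues i)]
  have hcA : eigDesc hAA.isHermitian ⟨0, hn⟩ < 1 := by
    obtain ⟨i, hi⟩ := eigDesc_top_eq hn hAA.isHermitian
    rw [hi]; exact heig i
  -- 1 - A is invertible
  have hBinv : IsUnit (1 - A).det := by
    rw [isUnit_iff_ne_zero]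
    intro hd0
    obtain ⟨y, hy0, hy⟩ := Matrix.exists_mulVec_eq_zero_iff.mpr hd0
    have hAy : A *ᵥ y = y := by
      have : (1 - A) *ᵥ y = y - A *ᵥ y := by
        rw [Matrix.sub_mulVec, Matrix.one_mulVec]
      rw [this] at hy
      linear_combination (norm := module) -hy
    have hq : star y ⬝ᵥ ((Aᴴ * A) *ᵥ y) = ((1 : ℝ) : ℂ) * (star y ⬝ᵥ y) := by
      rw [← Matrix.mulVec_mulVec, hAy, dotProduct_mulVec, ← Matrix.star_mulVec, hAy]
      push_cast
      ring
    have := r_le_eigDesc_top hn hAA.isHermitian hy0 hq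
    linarith
  -- the null vector of A
  obtain ⟨x, hx0, hx⟩ := Matrix.exists_mulVec_eq_zero_iff.mpr hdet
  have hBx : (1 - A) *ᵥ x = x := by
    rw [Matrix.sub_mulVec, Matrix.one_mulVec, hx, sub_zero]
  have hBix : (1 - A)⁻¹ *ᵥ x = x := by
    conv_lhs => rw [← hBx]
    rw [Matrix.mulVec_mulVec, Matrix.nonsing_inv_mul _ hBinv, Matrix.one_mulVec]
  -- star x ⬝ᵥ x is real
  have hstar : star (star x ⬝ᵥ x) = star x ⬝ᵥ x := by
    have h := dotProduct_star_self_nonneg x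
    obtain ⟨_, him⟩ := Complex.le_def.mp h
    apply Complex.ext <;> simp [Complex.star_def, ← him]
  -- Part 1
  have hconj : star x ⬝ᵥ (((1 - A)⁻¹)ᴴ *ᵥ x) = star x ⬝ᵥ x := by
    rw [quad_conjTranspose_eq_star, hBix, hstar]
  have quadH : star x ⬝ᵥ (hermPart (1 - A)⁻¹ *ᵥ x) = ((1 : ℝ) : ℂ) * (star x ⬝ᵥ x) := by
    unfold hermPart
    rw [Matrix.smul_mulVec, Matrix.add_mulVec, dotProduct_smul, dotProduct_add, hBix,
      hconj, smul_eq_mul]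
    push_cast
    ring
  have part1 : 1 ≤ eigDesc (hermPart_isHermitian (1 - A)⁻¹) ⟨0, hn⟩ :=
    r_le_eigDesc_top hn (hermPart_isHermitian (1 - A)⁻¹) hx0 quadH
  refine ⟨part1, ?_⟩
  -- Part 2
  set S := psdSqrt (Matrix.posSemidef_conjTranspose_mul_self A) with hSdef
  have hS : S.PosSemidef := by
    rw [hSdef]; unfold psdSqrt
    exact (posSemidef_diagonal_iff.mpr fun i => by
      simp only [Function.comp_apply]
      exact Complex.zero_le_real.mpr (Real.sqrt_nonneg _)).mul_mul_conjTranspose_same _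
  have hSS : S * S = Aᴴ * A := by
    have hU2 : (star (Matrix.posSemidef_conjTranspose_mul_self A).1.eigenvectorUnitary :
        Matrix (Fin n) (Fin n) ℂ) *
        ((Matrix.posSemidef_conjTranspose_mul_self A).1.eigenvectorUnitary :
          Matrix (Fin n) (Fin n) ℂ) = 1 :=
      mem_unitaryGroup_iff'.mp (Matrix.posSemidef_conjTranspose_mul_self A).1.eigenvectorUnitary.2
    have hD : diagonal (((↑) : ℝ → ℂ) ∘ (√·) ∘
          (Matrix.posSemidef_conjTranspose_mul_self A).1.eigenvalues) *
        diagonal (((↑) : ℝ → ℂ) ∘ (√·) ∘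
          (Matrix.posSemidef_conjTranspose_mul_self A).1.eigenvalues)
        = diagonal (RCLike.ofReal ∘ (Matrix.posSemidef_conjTranspose_mul_self A).1.eigenvalues) := by
      rw [diagonal_mul_diagonal]
      congr 1
      funext i
      simp only [Function.comp_apply]
      rw [← Complex.ofReal_mul,
        Real.mul_self_sqrt ((Matrix.posSemidef_conjTranspose_mul_self A).eigenvalues_nonneg i)]
      rfl
    conv_rhs => rw [(Matrix.posSemidef_conjTranspose_mul_self A).1.spectral_theorem,
      Unitary.conjStarAlgAut_apply]
    rw [hSdef]; unfold psdSqrt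
    simp only [Matrix.mul_assoc]
    rw [← Matrix.mul_assoc (star _) _, hU2, Matrix.one_mul, ← Matrix.mul_assoc (diagonal _) (diagonal _),
      hD]
  have hdetS : S.det = 0 := by
    have h2 : S.det * S.det = 0 := by
      rw [← Matrix.det_mul, hSS, Matrix.det_mul, Matrix.det_conjTranspose, hdet]
      simp
    exact mul_self_eq_zero.mp h2
  have h1S : (1 + S).PosDef := Matrix.PosDef.add_posSemidef Matrix.PosDef.one hS
  have hU : IsUnit (1 + S).det := h1S.det_pos.ne'.isUnit
  obtain ⟨y, hy0, hSy⟩ := Matrix.exists_mulVec_eq_zero_iff.mpr hdetS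
  have h1Sy : (1 + S) *ᵥ y = y := by
    rw [Matrix.add_mulVec, Matrix.one_mulVec, hSy, add_zero]
  have hB2y : (1 + S)⁻¹ *ᵥ y = y := by
    conv_lhs => rw [← h1Sy]
    rw [Matrix.mulVec_mulVec, Matrix.nonsing_inv_mul _ hU, Matrix.one_mulVec]
  have quad2 : star y ⬝ᵥ ((((1 + S)⁻¹)ᴴ * (1 + S)⁻¹) *ᵥ y) = ((1 : ℝ) : ℂ) * (star y ⬝ᵥ y) := by
    rw [← Matrix.mulVec_mulVec, hB2y, dotProduct_mulVec, ← Matrix.star_mulVec, hB2y]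
    push_cast
    ring
  have hM2 := (Matrix.posSemidef_conjTranspose_mul_self (1 + S)⁻¹).isHermitian
  have lower2 : 1 ≤ eigDesc hM2 ⟨0, hn⟩ := r_le_eigDesc_top hn hM2 hy0 quad2
  -- upper bound for part 2
  have hBH : ((1 + S)⁻¹)ᴴ = (1 + S)⁻¹ := by
    rw [Matrix.conjTranspose_nonsing_inv, h1S.isHermitian]
  have hSmulS : (S * S).PosSemidef := by
    have h := Matrix.posSemidef_conjTranspose_mul_self S
    rwa [hS.isHermitian] at h
  have hP : ((1 + S) * (1 + S) - 1).PosSemidef := by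
    have he : (1 + S) * (1 + S) - 1 = S + (S + S * S) := by noncomm_ring
    rw [he]
    exact hS.add (hS.add hSmulS)
  have e1 : ((1 + S)⁻¹)ᴴ * ((1 + S) * (1 + S)) * (1 + S)⁻¹ = 1 := by
    rw [hBH, ← Matrix.mul_assoc, Matrix.nonsing_inv_mul _ hU, Matrix.one_mul,
      Matrix.mul_nonsing_inv _ hU]
  have key2 : ((1 : ℝ) : ℂ) • (1 : Matrix (Fin n) (Fin n) ℂ) - ((1 + S)⁻¹)ᴴ * (1 + S)⁻¹
      = ((1 + S)⁻¹)ᴴ * ((1 + S) * (1 + S) - 1) * (1 + S)⁻¹ := by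
    rw [Matrix.mul_sub, Matrix.sub_mul, e1, Matrix.mul_one]
    push_cast
    rw [one_smul]
  have hpsd2 : (((1 : ℝ) : ℂ) • (1 : Matrix (Fin n) (Fin n) ℂ)
      - ((1 + S)⁻¹)ᴴ * (1 + S)⁻¹).PosSemidef := by
    rw [key2]
    exact hP.conjTranspose_mul_mul_same (1 + S)⁻¹
  have upper2 : eigDesc hM2 ⟨0, hn⟩ ≤ 1 :=
    eigDesc_top_le hn hM2 ((smul_one_sub_posSemidef_iff hM2 1).mp hpsd2)
  have eq2 : eigDesc hM2 ⟨0, hn⟩ = 1 := le_antisymm upper2 lower2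
  have part2 : singVal ((1 + S)⁻¹) ⟨0, hn⟩ = 1 := by
    unfold singVal
    rw [eq2, Real.sqrt_one]
  refine ⟨part2, ?_⟩
  -- Part 3
  set H := hermPart (1 - A)⁻¹ with hHdef
  have hH := hermPart_isHermitian (1 - A)⁻¹
  obtain ⟨i, hi⟩ := eigDesc_top_eq hn hH
  set v : Fin n → ℂ := ⇑(hH.eigenvectorBasis i) with hvdef
  have hv0 : v ≠ 0 := by
    intro h
    apply hH.eigenvectorBasis.orthonormal.ne_zero i
    ext j
    exact congrFun h j
  have hHv : H *ᵥ v = hH.eigenvalues i • v := hH.mulVec_eigenvectorBasis i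
  have quad3 : star v ⬝ᵥ ((Hᴴ * H) *ᵥ v)
      = ((hH.eigenvalues i ^ 2 : ℝ) : ℂ) * (star v ⬝ᵥ v) := by
    rw [← Matrix.mulVec_mulVec, hHv, Matrix.mulVec_smul, hH.eq, hHv, dotProduct_smul,
      dotProduct_smul]
    push_cast
    rw [Complex.real_smul, Complex.real_smul]
    ring
  have hM3 := (Matrix.posSemidef_conjTranspose_mul_self H).isHermitian
  have h3 : hH.eigenvalues i ^ 2 ≤ eigDesc hM3 ⟨0, hn⟩ :=
    r_le_eigDesc_top hn hM3 hv0 quad3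
  have hge1 : (1 : ℝ) ≤ eigDesc hM3 ⟨0, hn⟩ := by
    have h1 : (1 : ℝ) ≤ hH.eigenvalues i := by rw [← hi]; exact part1
    nlinarith
  rw [part2]
  unfold singVal
  rw [show (1 : ℝ) = Real.sqrt 1 by simp]
  exact Real.sqrt_le_sqrt hge1
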